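/- arXiv:1701.00061 — 3 statements merged into one kernel-verified Lean document; each statement's English description precedes it below -/
import Mathlib

section
/- Let K be a totally real number field of degree m over ℚ, let E be a totally complex extension of K with [E : K] = 2, let φ₁, …, φ_m : E → ℂ be pairwise distinct, pairwise non-conjugate ring embeddings, and let α ∈ K satisfy ℚ(α) = K. Let D_α : ℂ^m → ℂ^m be the diagonal map D_α(z)_i = φ_i(algebraMap K E α)·z_i. Then, regarding ℂ^m as a real vector space of dimension 2m and D_α as an ℝ-linear endomorphism, the characteristic polynomial of D_α over ℝ equals the square of the image in ℝ[X] of the minimal polynomial of α over ℚ: charpoly_ℝ(D_α) = (minpoly_ℚ(α) mapped to ℝ[X])². -/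
open Polynomial

theorem diag_charpoly' {n R : Type*} [Fintype n] [DecidableEq n] [CommRing R] (d : n → R) :
    (Matrix.diagonal d).charpoly = ∏ i, (X - C (d i)) := by
  rw [Matrix.charpoly,
    show Matrix.charmatrix (Matrix.diagonal d) = Matrix.diagonal fun i => X - C (d i) by
      ext i j
      by_cases h : i = j <;>
        simp [Matrix.charmatrix_apply, Matrix.diagonal_apply, h],
    Matrix.det_diagonal]

theorem diag_real_charpoly (m : ℕ) (c : Fin m → ℂ) (hc : ∀ i, (c i).im = 0) :
    ((LinearMap.pi fun i => c i • LinearMap.proj i :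
        (Fin m → ℂ) →ₗ[ℂ] (Fin m → ℂ)).restrictScalars ℝ).charpoly
      = ∏ i, (X - C ((c i).re)) ^ 2 := by
  classical
  let b : Module.Basis (Σ _ : Fin m, Fin 2) ℝ (Fin m → ℂ) :=
    Pi.basis fun _ : Fin m => Complex.basisOneI
  rw [← LinearMap.charpoly_toMatrix _ b]
  have : (LinearMap.toMatrix b b ((LinearMap.pi fun i => c i • LinearMap.proj i :
      (Fin m → ℂ) →ₗ[ℂ] (Fin m → ℂ)).restrictScalars ℝ))
      = Matrix.diagonal fun p => (c p.1).re := by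
    ext ⟨i, k⟩ ⟨j, l⟩
    rw [LinearMap.toMatrix_apply]
    by_cases h : i = j
    · subst h
      simp only [b, Pi.basis_apply, LinearMap.restrictScalars_apply, LinearMap.pi_apply,
        LinearMap.smul_apply, LinearMap.proj_apply, Pi.basis_repr]
      fin_cases l <;> fin_cases k <;>
        simp [Complex.coe_basisOneI_repr, Pi.single_apply, Matrix.diagonal_apply, hc i,
          Complex.ext_iff]
    · simp only [b, Pi.basis_apply, LinearMap.restrictScalars_apply, LinearMap.pi_apply,
        LinearMap.smul_apply, LinearMap.proj_apply, Pi.basis_repr, Pi.single_apply,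
        if_neg (Ne.symm h)]
      simp [Matrix.diagonal_apply, h]
  rw [this, diag_charpoly', ← Finset.univ_sigma_univ, Finset.prod_sigma]
  simp [sq]

/-- The `ℂ`-linear diagonal map `D_u : ℂ^m → ℂ^m`,
`D_u(z₁, …, z_m) = (φ₁(u)·z₁, …, φ_m(u)·z_m)`. -/
noncomputable def cmDiagMap (E : Type*) [Field E] (m : ℕ)
    (φ : Fin m → (E →+* ℂ)) (u : E) : (Fin m → ℂ) →ₗ[ℂ] (Fin m → ℂ) :=
  LinearMap.pi fun i => φ i u • LinearMap.proj i

/-- Let `K` be a totally real number field of degree `m` over `ℚ`, `E` a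
totally complex quadratic extension of `K`, `φ₁, …, φ_m : E → ℂ` pairwise
distinct, pairwise non-conjugate complex embeddings, and `α` a generator of
`K` over `ℚ`.  Regarding the diagonal map `D_α` as an `ℝ`-linear endomorphism
of `ℂ^m ≅ ℝ^{2m}`, its characteristic polynomial over `ℝ` is the square of
(the image in `ℝ[X]` of) the minimal polynomial of `α` over `ℚ`. -/
theorem cmDiagMap_real_charpoly
    (K E : Type*) [Field K] [NumberField K] [Field E] [NumberField E]
    [Algebra K E] (m : ℕ) (hm : Module.finrank ℚ K = m)
    (hdeg : Module.finrank K E = 2)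
    (hK : ∀ τ : K →+* ℂ, ∀ x : K, (τ x).im = 0)
    (hE : ∀ ψ : E →+* ℂ, ∃ x : E, (ψ x).im ≠ 0)
    (φ : Fin m → (E →+* ℂ))
    (hφ : ∀ i j : Fin m, i ≠ j →
      φ j ≠ φ i ∧ φ j ≠ (starRingEnd ℂ).comp (φ i))
    (α : K) (hα : IntermediateField.adjoin ℚ {α} = ⊤) :
    ((cmDiagMap E m φ (algebraMap K E α)).restrictScalars ℝ).charpoly =
      ((minpoly ℚ α).map (algebraMap ℚ ℝ)) ^ 2 := by
  classical
  set c : Fin m → ℂ := fun i => φ i (algebraMap K E α) with hc_def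
  have him : ∀ i, (c i).im = 0 := fun i => hK ((φ i).comp (algebraMap K E)) α
  have hint : IsIntegral ℚ α := Algebra.IsIntegral.isIntegral α
  -- the minimal polynomial has degree m
  have hdegm : (minpoly ℚ α).natDegree = m := by
    rw [← IntermediateField.adjoin.finrank hint]
    rw [show IntermediateField.adjoin ℚ {α} = (⊤ : IntermediateField ℚ K) from hα,
      IntermediateField.finrank_top', hm]
  -- the restrictions of the φᵢ to K are pairwise distinct
  have hτne : ∀ i j : Fin m, i ≠ j →
      (φ j).comp (algebraMap K E) ≠ (φ i).comp (algebraMap K E) := by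
    intro i j hij heq
    letI : Algebra K ℂ := ((φ i).comp (algebraMap K E)).toAlgebra
    haveI : FiniteDimensional K E := FiniteDimensional.of_finrank_pos (by omega)
    have comm_i : ∀ r : K, (φ i) (algebraMap K E r) = algebraMap K ℂ r := fun r => rfl
    have comm_j : ∀ r : K, (φ j) (algebraMap K E r) = algebraMap K ℂ r := fun r =>
      RingHom.congr_fun heq r
    have comm_c : ∀ r : K,
        ((starRingEnd ℂ).comp (φ i)) (algebraMap K E r) = algebraMap K ℂ r := by
      intro r
      have h0 : ((φ i) (algebraMap K E r)).im = 0 := hK ((φ i).comp (algebraMap K E)) r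
      have : (starRingEnd ℂ) ((φ i) (algebraMap K E r)) = (φ i) (algebraMap K E r) :=
        Complex.conj_eq_iff_im.mpr h0
      exact this
    let A : E →ₐ[K] ℂ := ⟨φ j, comm_j⟩
    let B : E →ₐ[K] ℂ := ⟨φ i, comm_i⟩
    let Cc : E →ₐ[K] ℂ := ⟨(starRingEnd ℂ).comp (φ i), comm_c⟩
    have hAB : A ≠ B := fun h => (hφ i j hij).1 (congrArg AlgHom.toRingHom h)
    have hAC : A ≠ Cc := fun h => (hφ i j hij).2 (congrArg AlgHom.toRingHom h)
    have hBC : B ≠ Cc := by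
      intro h
      obtain ⟨x, hx⟩ := hE (φ i)
      have := congrArg (fun (f : E →ₐ[K] ℂ) => f x) h
      simp only [B, Cc, AlgHom.coe_mk, RingHom.comp_apply] at this
      rw [Complex.ext_iff] at this
      simp [Complex.conj_im] at this
      exact hx (by linarith)
    have h3 : 3 ≤ Fintype.card (E →ₐ[K] ℂ) := by
      have hcard : ({A, B, Cc} : Finset (E →ₐ[K] ℂ)).card = 3 := by
        rw [Finset.card_insert_of_notMem (by simp [hAB, hAC]),
          Finset.card_insert_of_notMem (by simp [hBC]), Finset.card_singleton]
      calc 3 = ({A, B, Cc} : Finset (E →ₐ[K] ℂ)).card := hcard.symm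
        _ ≤ _ := Finset.card_le_univ _
    rw [AlgHom.card K E ℂ, hdeg] at h3
    omega
  -- the values c i are pairwise distinct
  have hcinj : Function.Injective c := by
    intro i j hval
    by_contra hij
    apply hτne j i (Ne.symm hij)
    -- turn the ring homs into ℚ-algebra homs and use that α generates K
    have hadj : Algebra.adjoin ℚ {α} = ⊤ := by
      rw [← IntermediateField.adjoin_simple_toSubalgebra_of_isAlgebraic hint.isAlgebraic, hα]
      rfl
    have hle : (⊤ : Subalgebra ℚ K) ≤ AlgHom.equalizer
        ((φ i).comp (algebraMap K E)).toRatAlgHom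
        ((φ j).comp (algebraMap K E)).toRatAlgHom := by
      rw [← hadj]
      apply Algebra.adjoin_le
      rintro x rfl
      exact hval
    have : ((φ i).comp (algebraMap K E)).toRatAlgHom
        = ((φ j).comp (algebraMap K E)).toRatAlgHom :=
      AlgHom.ext fun x => hle (Algebra.mem_top)
    exact congrArg AlgHom.toRingHom this
  -- the complex identity: minpoly maps to ∏ (X - c i)
  set P : ℂ[X] := (minpoly ℚ α).map (algebraMap ℚ ℂ) with hP_def
  have hP0 : P ≠ 0 := Polynomial.map_ne_zero (minpoly.ne_zero hint)
  have hroot : ∀ i, P.IsRoot (c i) := by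
    intro i
    have : Polynomial.aeval (c i) (minpoly ℚ α) = 0 := by
      have : c i = ((φ i).comp (algebraMap K E)).toRatAlgHom α := rfl
      rw [this, Polynomial.aeval_algHom_apply, minpoly.aeval, map_zero]
    rwa [Polynomial.aeval_def, ← Polynomial.eval_map] at this
  have hdvd : (∏ i, (X - C (c i))) ∣ P := by
    have hs : (Finset.univ.val.map c) ≤ P.roots := by
      refine (Multiset.le_iff_subset (Finset.univ.nodup.map hcinj)).mpr ?_
      intro x hx
      obtain ⟨i, _, rfl⟩ := Multiset.mem_map.mp hx
      exact (Polynomial.mem_roots hP0).mpr (hroot i)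
    have := (Multiset.prod_X_sub_C_dvd_iff_le_roots hP0 (Finset.univ.val.map c)).mpr hs
    simpa [Finset.prod, Multiset.map_map, Function.comp_def] using this
  have hQm : (∏ i, (X - C (c i))).Monic :=
    monic_prod_of_monic _ _ fun i _ => monic_X_sub_C (c i)
  have hQdeg : (∏ i, (X - C (c i))).natDegree = m := by
    rw [Polynomial.natDegree_prod_of_monic _ _ fun i _ => monic_X_sub_C (c i)]
    simp
  have hPdeg : P.natDegree = m := by
    rw [hP_def, Polynomial.natDegree_map, hdegm]
  have hPm : P.Monic := (minpoly.monic hint).map _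
  have hCeq : P = ∏ i, (X - C (c i)) :=
    (Polynomial.eq_of_dvd_of_natDegree_le_of_leadingCoeff hdvd
      (by rw [hQdeg, hPdeg]) (by rw [hQm.leadingCoeff, hPm.leadingCoeff])).symm
  -- descend to ℝ
  have hreal : (minpoly ℚ α).map (algebraMap ℚ ℝ) = ∏ i, (X - C ((c i).re)) := by
    apply Polynomial.map_injective (algebraMap ℝ ℂ) (algebraMap ℝ ℂ).injective
    rw [Polynomial.map_map, Polynomial.map_prod,
      show (algebraMap ℝ ℂ).comp (algebraMap ℚ ℝ) = algebraMap ℚ ℂ from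
        Subsingleton.elim _ _, ← hP_def, hCeq]
    refine Finset.prod_congr rfl fun i _ => ?_
    rw [Polynomial.map_sub, Polynomial.map_X, Polynomial.map_C]
    congr 1
    exact congrArg C (Complex.ext (by simp) (by simp [him i]))
  -- conclude via the real charpoly of a diagonal map
  have hchar : ((cmDiagMap E m φ (algebraMap K E α)).restrictScalars ℝ).charpoly
      = ∏ i, (X - C ((c i).re)) ^ 2 := diag_real_charpoly m c him
  rw [hchar, hreal, ← Finset.prod_pow]
end

section
/- Let K be a totally real number field of degree m ≥ 2 over ℚ, let E be a totally complex extension of K with [E : K] = 2, let φ₁, …, φ_m : E → ℂ be pairwise distinct, pairwise non-conjugate ring embeddings, let α ∈ K with ℚ(α) = K, and let σ : K → ℝ be a real embedding with σ(α) > 1. Let D_α : ℂ^m → ℂ^m be the diagonal map D_α(z)_i = φ_i(algebraMap K E α)·z_i, regarded as an ℝ-linear endomorphism of ℂ^m ≅ ℝ^{2m}. Then σ(α)² is an eigenvalue of the induced ℝ-linear endomorphism Λ²(D_α) of the second exterior power Λ²_ℝ(ℂ^m); in particular Λ²(D_α) has an eigenvalue strictly greater than 1. -/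
/-- The functorially induced endomorphism `Λ²(g)` of the second exterior power
`⋀[R]^2 M` of an endomorphism `g` of `M`. -/
noncomputable def exteriorSquareMap (R : Type*) [CommRing R]
    {M : Type*} [AddCommGroup M] [Module R M] (g : M →ₗ[R] M) :
    ⋀[R]^2 M →ₗ[R] ⋀[R]^2 M :=
  (ExteriorAlgebra.map g).toLinearMap.restrict
    (p := ⋀[R]^2 M) (q := ⋀[R]^2 M)
    (by
      have hbase : Submodule.map (ExteriorAlgebra.map g).toLinearMap
          (LinearMap.range (ExteriorAlgebra.ι R (M := M))) ≤
          LinearMap.range (ExteriorAlgebra.ι R (M := M)) := by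
        rintro x hx
        obtain ⟨y, ⟨v, rfl⟩, rfl⟩ := hx
        exact ⟨g v, (ExteriorAlgebra.map_apply_ι g v).symm⟩
      have hpow : Submodule.map (ExteriorAlgebra.map g).toLinearMap (⋀[R]^2 M) ≤
          ⋀[R]^2 M := by
        show Submodule.map (ExteriorAlgebra.map g).toLinearMap
            (LinearMap.range (ExteriorAlgebra.ι R (M := M)) ^ 2) ≤
          LinearMap.range (ExteriorAlgebra.ι R (M := M)) ^ 2
        rw [pow_two, Submodule.map_mul]
        exact mul_le_mul' hbase hbase
      intro x hx
      exact hpow ⟨x, hx, rfl⟩)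

theorem find_index (K E : Type*) [Field K] [NumberField K] [Field E] [NumberField E]
    [Algebra K E] (m : ℕ) (hm : Module.finrank ℚ K = m) (hdeg : Module.finrank K E = 2)
    (hE : ∀ ψ : E →+* ℂ, ∃ x : E, (ψ x).im ≠ 0)
    (φ : Fin m → (E →+* ℂ))
    (hφ : ∀ i j : Fin m, i ≠ j → φ j ≠ φ i ∧ φ j ≠ (starRingEnd ℂ).comp (φ i))
    (ψ : E →+* ℂ) :
    ∃ i, ψ = φ i ∨ ψ = (starRingEnd ℂ).comp (φ i) := by
  haveI htower : IsScalarTower ℚ K E :=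
    IsScalarTower.of_algebraMap_eq (fun x => RingHom.congr_fun (Subsingleton.elim (algebraMap ℚ E) ((algebraMap K E).comp (algebraMap ℚ K))) x)
  have hcardE : Fintype.card (E →+* ℂ) = m * 2 := by
    rw [NumberField.Embeddings.card E ℂ, ← Module.finrank_mul_finrank ℚ K E, hm, hdeg]
  set F : Fin m × Bool → (E →+* ℂ) := fun p =>
    if p.2 then (starRingEnd ℂ).comp (φ p.1) else φ p.1 with hF
  have hconjinj : Function.Injective ((starRingEnd ℂ).comp : (E →+* ℂ) → (E →+* ℂ)) := by
    intro f g h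
    ext x
    exact (starRingEnd ℂ).injective (RingHom.congr_fun h x)
  have hself : ∀ i, φ i ≠ (starRingEnd ℂ).comp (φ i) := by
    intro i h
    obtain ⟨x, hx⟩ := hE (φ i)
    have h2 : (φ i x).im = -(φ i x).im := by
      simpa using congrArg Complex.im (RingHom.congr_fun h x)
    apply hx; linarith
  have hinj : Function.Injective F := by
    rintro ⟨i, b⟩ ⟨j, b'⟩ h
    simp only [hF] at h
    by_cases hij : i = j
    · subst hij
      cases b <;> cases b' <;> simp only [if_true, if_false, Bool.false_eq_true] at h <;>
        first
          | rfl
          | exact absurd h (hself i)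
          | exact absurd h.symm (hself i)
    · exfalso
      cases b <;> cases b' <;> simp only [if_true, if_false, Bool.false_eq_true] at h
      · exact (hφ j i (Ne.symm hij)).1 h
      · exact (hφ j i (Ne.symm hij)).2 h
      · exact (hφ i j hij).2 h.symm
      · exact (hφ j i (Ne.symm hij)).1 (hconjinj h)
  have hsurj : Function.Surjective F :=
    ((Fintype.bijective_iff_injective_and_card F).2
      ⟨hinj, by simp [hcardE]⟩).2
  obtain ⟨⟨i, b⟩, hib⟩ := hsurj ψ
  refine ⟨i, ?_⟩
  cases b
  · left; simpa [hF] using hib.symm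
  · right; simpa [hF] using hib.symm

theorem eig (m : ℕ) (i : Fin m) (g : (Fin m → ℂ) →ₗ[ℝ] (Fin m → ℂ)) (c : ℝ)
    (hgv : g (Pi.single i 1) = c • (Pi.single i 1 : Fin m → ℂ))
    (hgw : g (Pi.single i Complex.I) = c • (Pi.single i Complex.I : Fin m → ℂ)) :
    Module.End.HasEigenvalue (exteriorSquareMap ℝ g) (c ^ 2) := by
  set v : Fin m → ℂ := Pi.single i 1 with hv
  set w : Fin m → ℂ := Pi.single i Complex.I with hw
  set x : ExteriorAlgebra ℝ (Fin m → ℂ) := ExteriorAlgebra.ιMulti ℝ 2 ![v, w] with hxdef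
  have hx : x ∈ ⋀[ℝ]^2 (Fin m → ℂ) := ExteriorAlgebra.ιMulti_range ℝ 2 ⟨![v, w], rfl⟩
  -- nonvanishing
  have hxne : x ≠ 0 := by
    set g2 : (Fin m → ℂ) →ₗ[ℝ] (Fin 2 → ℝ) :=
      LinearMap.pi ![Complex.reLm ∘ₗ LinearMap.proj i, Complex.imLm ∘ₗ LinearMap.proj i]
      with hg2
    set F : (Fin m → ℂ) [⋀^Fin 2]→ₗ[ℝ] ℝ :=
      (Matrix.detRowAlternating (n := Fin 2) (R := ℝ)).compLinearMap g2 with hFdef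
    set fam : ∀ j, (Fin m → ℂ) [⋀^Fin j]→ₗ[ℝ] ℝ :=
      fun j => match j with | 2 => F | _ => 0 with hfam
    intro h0
    have h1 : ExteriorAlgebra.liftAlternating fam x = F ![v, w] :=
      ExteriorAlgebra.liftAlternating_apply_ιMulti fam ![v, w]
    have h2 : F ![v, w] = 1 := by
      have : (Matrix.of fun k => g2 (![v, w] k)).det = 1 := by
        rw [Matrix.det_fin_two]
        simp [hg2, hv, hw, LinearMap.pi_apply]
      exact this
    rw [h0, map_zero] at h1
    rw [h2] at h1
    exact one_ne_zero h1.symm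
  -- the eigen equation
  have heq : (ExteriorAlgebra.map g) x = (c ^ 2) • x := by
    rw [hxdef, ExteriorAlgebra.map_apply_ιMulti]
    have hcomp : (⇑g ∘ ![v, w]) = fun k => c • (![v, w] k) := by
      funext k
      fin_cases k <;> simp [hgv, hgw]
    rw [hcomp]
    have := (ExteriorAlgebra.ιMulti ℝ 2 (M := Fin m → ℂ)).map_smul_univ (fun _ => c) ![v, w]
    simpa [pow_two, sq] using this
  apply Module.End.hasEigenvalue_of_hasEigenvector (x := (⟨x, hx⟩ : ⋀[ℝ]^2 (Fin m → ℂ)))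
  constructor
  · rw [Module.End.mem_eigenspace_iff]
    apply Subtype.ext
    rw [exteriorSquareMap, LinearMap.restrict_apply]
    exact heq
  · exact fun h => hxne (congrArg Subtype.val h)

/-- Let `K` be a totally real number field of degree `m ≥ 2` over `ℚ`, `E` a
totally complex quadratic extension of `K`, `φ₁, …, φ_m : E → ℂ` pairwise
distinct, pairwise non-conjugate complex embeddings, `α` a generator of `K`
over `ℚ`, and `σ : K → ℝ` a real embedding with `σ α > 1`.  Then `σ(α)²` is an
eigenvalue of the induced `ℝ`-linear endomorphism `Λ²(D_α)` of the second
exterior power of `ℂ^m` over `ℝ`; in particular `Λ²(D_α)` has an eigenvalue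
strictly greater than `1`. -/
theorem cm_exteriorSquare_has_large_eigenvalue
    (K E : Type*) [Field K] [NumberField K] [Field E] [NumberField E]
    [Algebra K E] (m : ℕ) (hm2 : 2 ≤ m) (hm : Module.finrank ℚ K = m)
    (hdeg : Module.finrank K E = 2)
    (hK : ∀ τ : K →+* ℂ, ∀ x : K, (τ x).im = 0)
    (hE : ∀ ψ : E →+* ℂ, ∃ x : E, (ψ x).im ≠ 0)
    (φ : Fin m → (E →+* ℂ))
    (hφ : ∀ i j : Fin m, i ≠ j →
      φ j ≠ φ i ∧ φ j ≠ (starRingEnd ℂ).comp (φ i))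
    (α : K) (hα : IntermediateField.adjoin ℚ {α} = ⊤)
    (σ : K →+* ℝ) (hσ : 1 < σ α) :
    Module.End.HasEigenvalue
      (exteriorSquareMap ℝ ((cmDiagMap E m φ (algebraMap K E α)).restrictScalars ℝ))
      (σ α ^ 2) ∧
    ∃ c : ℝ, 1 < c ∧
      Module.End.HasEigenvalue
        (exteriorSquareMap ℝ ((cmDiagMap E m φ (algebraMap K E α)).restrictScalars ℝ))
        c := by
  classical
  haveI htower : IsScalarTower ℚ K E :=
    IsScalarTower.of_algebraMap_eq (fun x => RingHom.congr_fun (Subsingleton.elim (algebraMap ℚ E) ((algebraMap K E).comp (algebraMap ℚ K))) x)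
  have hfin : Module.Finite K E := Module.Finite.of_restrictScalars_finite ℚ K E
  have halg : Algebra.IsAlgebraic K E := Algebra.IsAlgebraic.of_finite K E
  obtain ⟨ψ, hψ⟩ : ∃ ψ : E →+* ℂ, ∀ x : K, ψ (algebraMap K E x) = (σ x : ℂ) := by
    letI : Algebra K ℂ := (Complex.ofRealHom.comp σ).toAlgebra
    exact ⟨(IsAlgClosed.lift (R := K) (S := E) (M := ℂ)).toRingHom,
      fun x => (AlgHom.commutes _ x : _)⟩
  obtain ⟨i, hi⟩ := find_index K E m hm hdeg hE φ hφ ψ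
  have hφiα : φ i (algebraMap K E α) = ((σ α : ℝ) : ℂ) := by
    rcases hi with h | h
    · rw [← h, hψ]
    · have h1 := RingHom.congr_fun h (algebraMap K E α)
      rw [hψ] at h1
      have h2 := congrArg (starRingEnd ℂ) h1
      simpa [Complex.conj_ofReal] using h2.symm
  have hsingle : ∀ z : ℂ, (cmDiagMap E m φ (algebraMap K E α)) (Pi.single i z)
      = σ α • (Pi.single i z : Fin m → ℂ) := by
    intro z
    funext j
    simp only [cmDiagMap, LinearMap.pi_apply, LinearMap.smul_apply, LinearMap.proj_apply,
      Pi.smul_apply]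
    by_cases hji : j = i
    · subst hji
      rw [Pi.single_eq_same, hφiα]
      simp [Complex.real_smul]
    · rw [Pi.single_eq_of_ne hji]
      simp
  have hmain : Module.End.HasEigenvalue
      (exteriorSquareMap ℝ ((cmDiagMap E m φ (algebraMap K E α)).restrictScalars ℝ))
      (σ α ^ 2) := by
    apply eig m i _ (σ α)
    · exact hsingle 1
    · exact hsingle Complex.I
  refine ⟨hmain, σ α ^ 2, ?_, hmain⟩
  nlinarith
end

section
/- Let K be a totally real number field of degree m over ℚ, let E be a totally complex extension of K with [E : K] = 2, let φ₁, …, φ_m : E → ℂ be pairwise distinct, pairwise non-conjugate ring embeddings, set Φ(a) = (φ₁(a), …, φ_m(a)) and Λ := Φ(O_E). Let α ∈ K be a unit of O_K such that σ(α) > 1 for some real embedding σ : K → ℝ, and let f_α be the automorphism of the quotient group ℂ^m / Λ induced by the diagonal map D_α(z)_i = φ_i(algebraMap K E α)·z_i. Then f_α has infinite order: f_α^n is not the identity of ℂ^m / Λ for every integer n ≥ 1. -/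
open NumberField

/-- The image `Λ = Φ(O_E)` of the ring of integers of `E` under the embedding
`Φ = (φ₁, …, φ_m) : E → ℂ^m`, as an additive subgroup of `ℂ^m`. -/
noncomputable def cmLattice (E : Type*) [Field E] [NumberField E]
    (m : ℕ) (φ : Fin m → (E →+* ℂ)) : AddSubgroup (Fin m → ℂ) :=
  AddMonoidHom.range
    { toFun := fun a : 𝓞 E => fun i => φ i (a : E)
      map_zero' := by funext i; simp
      map_add' := by intro a b; funext i; push_cast; simp }

lemma cmDiagMap_apply (E : Type*) [Field E] (m : ℕ)
    (φ : Fin m → (E →+* ℂ)) (u : E) (z : Fin m → ℂ) (i : Fin m) :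
    cmDiagMap E m φ u z i = φ i u * z i := by
  simp [cmDiagMap]

lemma cmDiagMap_pow_apply (E : Type*) [Field E] (m : ℕ)
    (φ : Fin m → (E →+* ℂ)) (u : E) (k : ℕ) (z : Fin m → ℂ) (i : Fin m) :
    ((cmDiagMap E m φ u) ^ k) z i = (φ i u) ^ k * z i := by
  induction k generalizing z with
  | zero => simp
  | succ k ih =>
    rw [pow_succ, Module.End.mul_apply, ih, cmDiagMap_apply, pow_succ]
    ring

lemma complex_not_countable : ¬ Countable ℂ := fun h => by
  have := Cardinal.mk_le_aleph0_iff.mpr h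
  rw [Cardinal.mk_complex] at this
  exact absurd (lt_of_lt_of_le Cardinal.aleph0_lt_continuum this) (lt_irrefl _)

/-- Let `K` be a totally real number field of degree `m` over `ℚ`, `E` a
totally complex quadratic extension of `K`, `φ₁, …, φ_m : E → ℂ` pairwise
distinct, pairwise non-conjugate complex embeddings, and `Λ = Φ(O_E)`.  Let
`α` be a unit of the ring of integers of `K` with `σ α > 1` for some real
embedding `σ : K → ℝ`.  Then any automorphism `f_α` of the quotient group
`ℂ^m / Λ` induced by the diagonal map `D_α` (i.e. with `f_α ∘ π = π ∘ D_α`)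
has infinite order: `f_α ^ n ≠ 1` for all `n ≥ 1`. -/
theorem cm_translation_automorphism_infinite_order
    (K E : Type*) [Field K] [NumberField K] [Field E] [NumberField E]
    [Algebra K E] (m : ℕ) (hm : Module.finrank ℚ K = m)
    (hdeg : Module.finrank K E = 2)
    (hK : ∀ τ : K →+* ℂ, ∀ x : K, (τ x).im = 0)
    (hE : ∀ ψ : E →+* ℂ, ∃ x : E, (ψ x).im ≠ 0)
    (φ : Fin m → (E →+* ℂ))
    (hφ : ∀ i j : Fin m, i ≠ j →
      φ j ≠ φ i ∧ φ j ≠ (starRingEnd ℂ).comp (φ i))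
    (α : 𝓞 K) (hunit : IsUnit α)
    (σ : K →+* ℝ) (hσ : 1 < σ (α : K)) :
    ∀ f : AddAut ((Fin m → ℂ) ⧸ cmLattice E m φ),
      (∀ z : Fin m → ℂ,
        f (QuotientAddGroup.mk' (cmLattice E m φ) z) =
          QuotientAddGroup.mk' (cmLattice E m φ)
            (cmDiagMap E m φ (algebraMap K E (α : K)) z)) →
      ∀ n : ℕ, 1 ≤ n → n • f ≠ 0 := by
  intro f hf n hn hcontra
  set A : E := algebraMap K E (α : K) with hA
  -- the restrictions of the `φ i` to `K` are pairwise distinct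
  set r : Fin m → (K →+* ℂ) := fun i => (φ i).comp (algebraMap K E) with hr
  have hrinj : Function.Injective r := by
    intro i j hij
    by_contra hne
    -- set up the algebra structure on ℂ via τ = r i
    letI : Algebra K ℂ := (r i).toAlgebra
    have halg : algebraMap K ℂ = r i := rfl
    -- three distinct K-algebra homs E →ₐ[K] ℂ
    have hcomm1 : ∀ k : K, φ i (algebraMap K E k) = algebraMap K ℂ k := fun k => rfl
    have hcomm2 : ∀ k : K, (starRingEnd ℂ).comp (φ i) (algebraMap K E k)
        = algebraMap K ℂ k := by
      intro k
      have : ((r i) k).im = 0 := hK (r i) k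
      simp only [RingHom.comp_apply, halg]
      rw [show φ i (algebraMap K E k) = r i k from rfl]
      exact Complex.conj_eq_iff_im.mpr this
    have hcomm3 : ∀ k : K, φ j (algebraMap K E k) = algebraMap K ℂ k := by
      intro k
      rw [halg]
      exact DFunLike.congr_fun hij.symm k
    let ψ₁ : E →ₐ[K] ℂ := { toRingHom := φ i, commutes' := hcomm1 }
    let ψ₂ : E →ₐ[K] ℂ := { toRingHom := (starRingEnd ℂ).comp (φ i), commutes' := hcomm2 }
    let ψ₃ : E →ₐ[K] ℂ := { toRingHom := φ j, commutes' := hcomm3 }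
    have h12 : ψ₁ ≠ ψ₂ := by
      obtain ⟨x, hx⟩ := hE (φ i)
      intro h
      have := congrArg (fun g => (g x : ℂ).im) h
      simp only [ψ₁, ψ₂] at this
      apply hx
      have : (φ i x).im = ((starRingEnd ℂ) (φ i x)).im := this
      rw [Complex.conj_im] at this
      linarith
    have h31 : ψ₃ ≠ ψ₁ := by
      intro h
      exact (hφ i j hne).1 (RingHom.ext fun x => congrArg (fun g => (g x : ℂ)) h)
    have h32 : ψ₃ ≠ ψ₂ := by
      intro h
      exact (hφ i j hne).2 (RingHom.ext fun x => congrArg (fun g => (g x : ℂ)) h)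
    have hcard : 2 < Fintype.card (E →ₐ[K] ℂ) :=
      Fintype.two_lt_card_iff.mpr ⟨ψ₃, ψ₁, ψ₂, h31, h32, h12⟩
    rw [AlgHom.card, hdeg] at hcard
    exact lt_irrefl 2 hcard
  -- hence they exhaust all embeddings of K, in particular `σ` lifts
  have hbij : Function.Bijective r := by
    rw [Fintype.bijective_iff_injective_and_card]
    exact ⟨hrinj, by rw [Fintype.card_fin, NumberField.Embeddings.card K ℂ, hm]⟩
  obtain ⟨i, hi⟩ := hbij.2 (Complex.ofRealHom.comp σ)
  have hφiA : φ i A = (σ (α : K) : ℂ) := by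
    have := congrArg (fun g : K →+* ℂ => g (α : K)) hi
    simpa [r, hA] using this
  -- the eigenvalue at coordinate `i` has `n`-th power different from 1
  have hc : (φ i A) ^ n - 1 ≠ 0 := by
    rw [hφiA]
    intro h
    rw [sub_eq_zero] at h
    have h2 : (σ (α : K)) ^ n = 1 := by exact_mod_cast h
    have h3 : (1 : ℝ) < (σ (α : K)) ^ n := one_lt_pow₀ hσ (by omega)
    rw [h2] at h3
    exact lt_irrefl 1 h3
  -- from `f ^ n = 1`, every `D^n z - z` lies in the lattice
  have hpow : ∀ k : ℕ, ∀ z : Fin m → ℂ,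
      (k • f) (QuotientAddGroup.mk' (cmLattice E m φ) z) =
        QuotientAddGroup.mk' (cmLattice E m φ) (((cmDiagMap E m φ A) ^ k) z) := by
    intro k
    induction k with
    | zero => intro z; simp
    | succ k ih =>
      intro z
      rw [succ_nsmul, AddAut.add_apply, hf z, ih, pow_succ, Module.End.mul_apply]
  have hmem : ∀ z : Fin m → ℂ,
      ((cmDiagMap E m φ A) ^ n) z - z ∈ cmLattice E m φ := by
    intro z
    have := hpow n z
    rw [hcontra] at this
    have h2 : QuotientAddGroup.mk' (cmLattice E m φ) (((cmDiagMap E m φ A) ^ n) z)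
        = QuotientAddGroup.mk' (cmLattice E m φ) z := by
      simpa using this.symm
    obtain ⟨w, hw, hw2⟩ := (QuotientAddGroup.mk'_eq_mk' _).mp h2
    have : ((cmDiagMap E m φ A) ^ n) z - z = -w := by
      linear_combination hw2
    rw [this]
    exact neg_mem hw
  -- build an injection `ℂ → 𝓞 E`, contradicting countability
  have hmem' : ∀ t : ℂ, ∃ a : 𝓞 E,
      (fun j => φ j (a : E)) = ((cmDiagMap E m φ A) ^ n) (Pi.single i t) - Pi.single i t := by
    intro t
    obtain ⟨a, ha⟩ := hmem (Pi.single i t)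
    exact ⟨a, ha⟩
  have hwinj : Function.Injective
      (fun t : ℂ => ((cmDiagMap E m φ A) ^ n) (Pi.single i t) - Pi.single i t) := by
    intro s t hst
    have := congrFun hst i
    simp only [Pi.sub_apply, cmDiagMap_pow_apply, Pi.single_eq_same] at this
    have h2 : ((φ i A) ^ n - 1) * s = ((φ i A) ^ n - 1) * t := by ring_nf; ring_nf at this; linear_combination this
    exact mul_left_cancel₀ hc h2
  have hcount : Countable (𝓞 E) := by
    have hEc : Countable E :=
      Countable.of_equiv _ (Module.finBasis ℚ E).equivFun.toEquiv.symm
    exact Subtype.countable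
  have : Countable ℂ := by
    have hginj : Function.Injective (fun t : ℂ => (hmem' t).choose) := by
      intro s t hst
      apply hwinj
      show (cmDiagMap E m φ A ^ n) (Pi.single i s) - Pi.single i s =
        (cmDiagMap E m φ A ^ n) (Pi.single i t) - Pi.single i t
      rw [← (hmem' s).choose_spec, ← (hmem' t).choose_spec]
      exact congrArg (fun a : 𝓞 E => fun j => φ j (a : E)) hst
    exact hginj.countable
  exact complex_not_countable this
end
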